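/- Let s = σ + it be a complex number with σ > 1/2, and assume moreover that σ > 1 or |t| > 1. Then F_s ∈ L²(0,1) and the partial sums S_K(a) = ∑_{k=1}^K k^{-s} e^{2πika} converge to F_s in the L²(0,1) norm as K → ∞. -/

import Mathlib

open MeasureTheory Complex Real Set Filter Topology

/-- The periodized zeta function `F s a`, i.e. the analytic continuation in `s` of
`∑ k ≥ 1, exp (2πika) / k ^ s`, realized as Mathlib's `expZeta` at the point `a` of the
unit additive circle. -/
noncomputable def periodizedZeta (s : ℂ) (a : ℝ) : ℂ := HurwitzZeta.expZeta (a : UnitAddCircle) s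



namespace PZaux

/-- Coefficients `k ^ (-s)`, set to `0` at `k = 0`. -/
noncomputable def coef (s : ℂ) (k : ℕ) : ℂ := if k = 0 then 0 else (k : ℂ) ^ (-s)

lemma coef_zero (s : ℂ) : coef s 0 = 0 := rfl

lemma coef_one (s : ℂ) : coef s 1 = 1 := by simp [coef]

lemma coef_of_ne_zero (s : ℂ) {k : ℕ} (hk : k ≠ 0) : coef s k = (k : ℂ) ^ (-s) := if_neg hk

lemma norm_coef {k : ℕ} (hk : k ≠ 0) (s : ℂ) : ‖coef s k‖ = (k : ℝ) ^ (-s.re) := by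
  rw [coef_of_ne_zero s hk, Complex.norm_natCast_cpow_of_pos (Nat.pos_of_ne_zero hk), neg_re]

lemma differentiable_coef (k : ℕ) : Differentiable ℂ (fun s => coef s k) := by
  rcases eq_or_ne k 0 with rfl | hk
  · simpa [coef] using differentiable_const (0 : ℂ)
  · have : (fun s => coef s k) = fun s => (k : ℂ) ^ (-s) := by
      funext s; exact coef_of_ne_zero s hk
    rw [this]
    exact Differentiable.const_cpow (differentiable_neg) (Or.inl (Nat.cast_ne_zero.mpr hk))

/-- Mean value bound for differences of `coef`. -/
lemma coef_diff_bound {s : ℂ} (hs : 0 < s.re) {k : ℕ} (hk : 1 ≤ k) :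
    ‖coef s (k + 1) - coef s k‖ ≤ ‖s‖ * (k : ℝ) ^ (-s.re - 1) := by
  have hs0 : s ≠ 0 := fun h => by simp [h] at hs
  have hkR : (1 : ℝ) ≤ (k : ℝ) := by exact_mod_cast hk
  have hkpos : (0 : ℝ) < k := lt_of_lt_of_le one_pos hkR
  -- the derivative fact
  have hder : ∀ x : ℝ, x ∈ Set.Icc (k : ℝ) ((k : ℝ) + 1) →
      HasDerivAt (fun y : ℝ => ((y : ℂ)) ^ (-s)) (-s * (x : ℂ) ^ (-s - 1)) x := by
    intro x hx
    have hx0 : x ≠ 0 := by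
      have : (0:ℝ) < x := lt_of_lt_of_le hkpos hx.1
      exact ne_of_gt this
    have hr : (-s - 1 : ℂ) ≠ -1 := by
      intro h
      apply hs0
      have : -s = 0 := by linear_combination h
      linear_combination -this
    have h1 := hasDerivAt_ofReal_cpow_const' (r := -s - 1) hx0 hr
    have h2 : (-s - 1 + 1 : ℂ) = -s := by ring
    rw [h2] at h1
    have h3 := h1.const_mul (-s)
    have h4 : (fun y : ℝ => -s * ((y : ℂ) ^ (-s) / (-s))) = fun y : ℝ => (y : ℂ) ^ (-s) := by
      funext y
      field_simp
    rw [h4] at h3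
    exact h3
  have hC : ∀ x : ℝ, x ∈ Set.Icc (k : ℝ) ((k : ℝ) + 1) →
      ‖-s * (x : ℂ) ^ (-s - 1)‖ ≤ ‖s‖ * (k : ℝ) ^ (-s.re - 1) := by
    intro x hx
    have hxpos : (0:ℝ) < x := lt_of_lt_of_le hkpos hx.1
    rw [norm_mul, norm_neg]
    refine mul_le_mul_of_nonneg_left ?_ (norm_nonneg s)
    have : ‖(x : ℂ) ^ (-s - 1)‖ = x ^ ((-s - 1).re) := by
      rw [Complex.norm_cpow_eq_rpow_re_of_pos hxpos]
    rw [this]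
    have hre : (-s - 1 : ℂ).re = -s.re - 1 := by simp
    rw [hre]
    exact Real.rpow_le_rpow_of_nonpos hkpos hx.1 (by linarith)
  have key := Convex.norm_image_sub_le_of_norm_hasDerivWithin_le
    (fun x hx => (hder x hx).hasDerivWithinAt) hC (convex_Icc _ _)
    (Set.left_mem_Icc.mpr (by linarith)) (Set.right_mem_Icc.mpr (by linarith))
  have hcast : ((k : ℝ) + 1 : ℝ) = ((k + 1 : ℕ) : ℝ) := by push_cast; ring
  rw [coef_of_ne_zero s (Nat.succ_ne_zero k), coef_of_ne_zero s (by omega : k ≠ 0)]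
  have e1 : ((k + 1 : ℕ) : ℂ) = (((k : ℝ) + 1 : ℝ) : ℂ) := by push_cast; ring
  have e2 : ((k : ℕ) : ℂ) = (((k : ℝ)) : ℂ) := by push_cast; ring
  rw [e1, e2]
  calc ‖(((k:ℝ) + 1 : ℝ) : ℂ) ^ (-s) - (((k:ℝ) : ℝ) : ℂ) ^ (-s)‖
      ≤ ‖s‖ * (k : ℝ) ^ (-s.re - 1) * ‖((k:ℝ) + 1) - (k:ℝ)‖ := key
    _ = ‖s‖ * (k : ℝ) ^ (-s.re - 1) := by simp

section Pointwise

variable {a : ℝ}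

/-- `z = e^{2πia}`. -/
noncomputable def zc (a : ℝ) : ℂ := Complex.exp (2 * π * Complex.I * a)

lemma zc_pow (a : ℝ) (k : ℕ) : zc a ^ k = Complex.exp (2 * π * Complex.I * k * a) := by
  rw [zc, ← Complex.exp_nat_mul]
  congr 1
  push_cast
  ring

lemma norm_zc (a : ℝ) : ‖zc a‖ = 1 := by
  rw [zc, Complex.norm_exp]
  have : (2 * ↑π * I * ↑a).re = 0 := by simp
  rw [this, Real.exp_zero]

lemma zc_ne_one (ha : a ∈ Set.Ioo (0:ℝ) 1) : zc a ≠ 1 := by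
  intro h
  rw [zc, Complex.exp_eq_one_iff] at h
  obtain ⟨n, hn⟩ := h
  have h2 : (2 * ↑π * I : ℂ) ≠ 0 := by
    simp [Real.pi_ne_zero, Complex.I_ne_zero]
  have : (a : ℂ) = (n : ℂ) := by
    have h3 : (a : ℂ) * (2 * ↑π * I) = (n : ℂ) * (2 * ↑π * I) := by
      linear_combination hn
    exact mul_right_cancel₀ h2 h3
  have haN : a = (n : ℝ) := by exact_mod_cast this
  rcases ha with ⟨h0, h1⟩
  rw [haN] at h0 h1
  have hn0 : (0 : ℤ) < n := by exact_mod_cast h0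
  have hn1 : n < 1 := by exact_mod_cast h1
  omega

/-- Partial geometric sums. -/
noncomputable def Ege (a : ℝ) (n : ℕ) : ℂ := ∑ k ∈ Finset.range n, zc a ^ k

noncomputable def Mbd (a : ℝ) : ℝ := 2 / ‖zc a - 1‖

lemma Mbd_nonneg (a : ℝ) : 0 ≤ Mbd a := by
  apply div_nonneg <;> positivity

lemma norm_Ege_le (ha : a ∈ Set.Ioo (0:ℝ) 1) (n : ℕ) : ‖Ege a n‖ ≤ Mbd a := by
  rw [Ege, geom_sum_eq (zc_ne_one ha) n, Mbd, norm_div]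
  have hden : 0 < ‖zc a - 1‖ := by
    rw [norm_pos_iff, sub_ne_zero]; exact zc_ne_one ha
  have hnum : ‖zc a ^ n - 1‖ ≤ 2 := by
    calc ‖zc a ^ n - 1‖ ≤ ‖zc a ^ n‖ + ‖(1:ℂ)‖ := norm_sub_le _ _
      _ = 1 + 1 := by rw [norm_pow, norm_zc]; simp
      _ = 2 := by norm_num
  gcongr

/-- The Abel-summed term. -/
noncomputable def term (a : ℝ) (i : ℕ) (s : ℂ) : ℂ :=
  (coef s (i + 1) - coef s i) * Ege a (i + 1)

lemma term_zero (a : ℝ) (s : ℂ) : ‖term a 0 s‖ = 1 := by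
  simp [term, coef_one, coef_zero, Ege]

lemma norm_term_le (ha : a ∈ Set.Ioo (0:ℝ) 1) {i : ℕ} (hi : 1 ≤ i) {s : ℂ} (hs : 0 < s.re) :
    ‖term a i s‖ ≤ ‖s‖ * Mbd a * (i : ℝ) ^ (-s.re - 1) := by
  rw [term, norm_mul]
  calc ‖coef s (i+1) - coef s i‖ * ‖Ege a (i+1)‖
      ≤ (‖s‖ * (i:ℝ) ^ (-s.re - 1)) * Mbd a := by
        apply mul_le_mul (coef_diff_bound hs hi) (norm_Ege_le ha _) (norm_nonneg _)
        positivity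
    _ = ‖s‖ * Mbd a * (i : ℝ) ^ (-s.re - 1) := by ring

lemma summable_term (ha : a ∈ Set.Ioo (0:ℝ) 1) {s : ℂ} (hs : 0 < s.re) :
    Summable (fun i => term a i s) := by
  apply Summable.of_norm_bounded_eventually (g := fun i : ℕ => (‖s‖ * Mbd a) * (i : ℝ) ^ (-s.re - 1))
  · apply Summable.mul_left
    rw [Real.summable_nat_rpow]
    linarith
  · have : {i : ℕ | ¬ ‖term a i s‖ ≤ ‖s‖ * Mbd a * (i:ℝ) ^ (-s.re - 1)} ⊆ {0} := by
      intro i hi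
      by_contra h0
      exact hi (by rw [mul_assoc] at *; exact (by rw [← mul_assoc]; exact norm_term_le ha (Nat.one_le_iff_ne_zero.mpr (by simpa using h0)) hs))
    exact Set.Finite.subset (Set.finite_singleton 0) this

/-- The candidate limit function. -/
noncomputable def limA (a : ℝ) (s : ℂ) : ℂ := -∑' i, term a i s

/-- Partial sums converge to `limA` for `re s > 0`. -/
lemma tendsto_partial_limA (ha : a ∈ Set.Ioo (0:ℝ) 1) {s : ℂ} (hs : 0 < s.re) :
    Tendsto (fun n => ∑ k ∈ Finset.range n, coef s k * zc a ^ k) atTop (𝓝 (limA a s)) := by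
  have habel : ∀ n : ℕ, ∑ k ∈ Finset.range n, coef s k * zc a ^ k
      = coef s (n - 1) * Ege a n - ∑ i ∈ Finset.range (n - 1), term a i s := by
    intro n
    have := Finset.sum_range_by_parts (fun k => coef s k) (fun k => zc a ^ k) n
    simpa [smul_eq_mul, Ege, term] using this
  simp_rw [habel]
  have h1 : Tendsto (fun n : ℕ => coef s (n - 1) * Ege a n) atTop (𝓝 0) := by
    have hbd : ∀ᶠ n : ℕ in atTop,
        ‖coef s (n - 1) * Ege a n‖ ≤ Mbd a * ((n - 1 : ℕ) : ℝ) ^ (-s.re) := by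
      filter_upwards [eventually_ge_atTop 2] with n hn
      have hn1 : (n : ℕ) - 1 ≠ 0 := by omega
      rw [norm_mul, norm_coef hn1]
      calc ((n-1:ℕ):ℝ) ^ (-s.re) * ‖Ege a n‖ ≤ ((n-1:ℕ):ℝ) ^ (-s.re) * Mbd a := by
            apply mul_le_mul_of_nonneg_left (norm_Ege_le ha n) (by positivity)
        _ = Mbd a * ((n-1:ℕ):ℝ) ^ (-s.re) := by ring
    refine squeeze_zero_norm' hbd ?_
    · have h2 : Tendsto (fun x : ℝ => x ^ (-s.re)) atTop (𝓝 0) := tendsto_rpow_neg_atTop hs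
      have h3 : Tendsto (fun n : ℕ => ((n - 1 : ℕ) : ℝ)) atTop atTop :=
        tendsto_natCast_atTop_atTop.comp (tendsto_sub_atTop_nat 1)
      have := (h2.comp h3).const_mul (Mbd a)
      simpa using this
  have h2 : Tendsto (fun n : ℕ => ∑ i ∈ Finset.range (n - 1), term a i s) atTop
      (𝓝 (∑' i, term a i s)) :=
    ((summable_term ha hs).hasSum.tendsto_sum_nat).comp (tendsto_sub_atTop_nat 1)
  have := h1.sub h2
  simpa [limA] using this

/-- `limA a` is differentiable on `{s | 1/2 < re s}`. -/
lemma differentiableOn_limA (ha : a ∈ Set.Ioo (0:ℝ) 1) :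
    DifferentiableOn ℂ (limA a) {s : ℂ | 1/2 < s.re} := by
  intro s₀ hs₀
  apply DifferentiableAt.differentiableWithinAt
  set r : ℝ := (s₀.re - 1/2) / 2 with hr
  have hrpos : 0 < r := by simp only [hr]; simp only [Set.mem_setOf_eq] at hs₀; linarith
  set σ₀ : ℝ := s₀.re - r with hσ₀
  have hσ₀half : 1/2 < σ₀ := by
    simp only [Set.mem_setOf_eq] at hs₀
    simp only [hσ₀, hr]; linarith
  set u : ℕ → ℝ := fun i => if i = 0 then 1 else ((‖s₀‖ + r) * Mbd a) * (i : ℝ) ^ (-σ₀ - 1) with hu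
  have hball : ∀ w ∈ Metric.ball s₀ r, σ₀ < w.re ∧ ‖w‖ ≤ ‖s₀‖ + r := by
    intro w hw
    rw [Metric.mem_ball, dist_eq_norm] at hw
    constructor
    · have : |(w - s₀).re| ≤ ‖w - s₀‖ := Complex.abs_re_le_norm _
      have h2 : |w.re - s₀.re| < r := by
        rw [← Complex.sub_re] at *
        exact lt_of_le_of_lt this hw
      have := abs_lt.mp h2
      simp only [hσ₀]; linarith [this.1]
    · calc ‖w‖ = ‖s₀ + (w - s₀)‖ := by ring_nf
        _ ≤ ‖s₀‖ + ‖w - s₀‖ := norm_add_le _ _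
        _ ≤ ‖s₀‖ + r := by linarith
  have hdiff : DifferentiableOn ℂ (fun w => ∑' i, term a i w) (Metric.ball s₀ r) := by
    apply differentiableOn_tsum_of_summable_norm (u := u)
    · rw [← summable_nat_add_iff 1]
      have : (fun n : ℕ => u (n + 1)) =
          fun n : ℕ => ((‖s₀‖ + r) * Mbd a) * ((n + 1 : ℕ) : ℝ) ^ (-σ₀ - 1) := by
        funext n; simp [hu]
      rw [this]
      apply Summable.mul_left
      exact (summable_nat_add_iff 1).mpr (Real.summable_nat_rpow.mpr (by linarith))
    · intro i
      apply DifferentiableOn.mul _ (differentiableOn_const _)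
      exact ((differentiable_coef (i+1)).sub (differentiable_coef i)).differentiableOn
    · exact Metric.isOpen_ball
    · intro i w hw
      obtain ⟨hw1, hw2⟩ := hball w hw
      rcases eq_or_ne i 0 with rfl | hi
      · rw [term_zero]; simp [hu]
      · have h0w : 0 < w.re := by linarith
        calc ‖term a i w‖ ≤ ‖w‖ * Mbd a * (i : ℝ) ^ (-w.re - 1) :=
              norm_term_le ha (Nat.one_le_iff_ne_zero.mpr hi) h0w
          _ ≤ (‖s₀‖ + r) * Mbd a * (i : ℝ) ^ (-σ₀ - 1) := by
              apply mul_le_mul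
              · exact mul_le_mul_of_nonneg_right hw2 (Mbd_nonneg a)
              · apply Real.rpow_le_rpow_of_exponent_le
                · exact_mod_cast Nat.one_le_iff_ne_zero.mpr hi
                · linarith
              · positivity
              · exact mul_nonneg (by positivity) (Mbd_nonneg a)
          _ = u i := by simp [hu, hi]
  have : DifferentiableAt ℂ (fun w => ∑' i, term a i w) s₀ :=
    hdiff.differentiableAt (Metric.isOpen_ball.mem_nhds (Metric.mem_ball_self hrpos))
  exact this.neg

end Pointwise

lemma coe_ne_zero_of_mem_Ioo (ha : a ∈ Set.Ioo (0:ℝ) 1) : (↑a : UnitAddCircle) ≠ 0 := by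
  intro h
  rw [AddCircle.coe_eq_zero_iff] at h
  obtain ⟨n, hn⟩ := h
  have : a = (n : ℝ) := by simpa using hn.symm
  rcases ha with ⟨h0, h1⟩
  rw [this] at h0 h1
  have hn0 : (0 : ℤ) < n := by exact_mod_cast h0
  have hn1 : n < 1 := by exact_mod_cast h1
  omega

lemma eqOn_limA_expZeta (ha : a ∈ Set.Ioo (0:ℝ) 1) :
    Set.EqOn (limA a) (fun s => HurwitzZeta.expZeta (↑a : UnitAddCircle) s)
      {s : ℂ | 1/2 < s.re} := by
  have hU : IsOpen {s : ℂ | 1/2 < s.re} := isOpen_lt continuous_const Complex.continuous_re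
  have hUconn : IsPreconnected {s : ℂ | 1/2 < s.re} :=
    (convex_halfSpace_re_gt (1/2)).isPreconnected
  have hV : IsOpen {s : ℂ | 1 < s.re} := isOpen_lt continuous_const Complex.continuous_re
  -- equality on `1 < re s`
  have heq : Set.EqOn (limA a) (fun s => HurwitzZeta.expZeta (↑a : UnitAddCircle) s)
      {s : ℂ | 1 < s.re} := by
    intro s hs
    simp only [Set.mem_setOf_eq] at hs
    have hs0 : s ≠ 0 := by
      intro h; rw [h, Complex.zero_re] at hs; norm_num at hs
    have hsum := HurwitzZeta.hasSum_expZeta_of_one_lt_re a hs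
    have hterm : ∀ n : ℕ, Complex.exp (2 * π * I * a * n) / (n : ℂ) ^ s
        = coef s n * zc a ^ n := by
      intro n
      rcases eq_or_ne n 0 with rfl | hn
      · simp [coef_zero, Complex.zero_cpow hs0]
      · rw [coef_of_ne_zero s hn, zc_pow, Complex.cpow_neg]
        rw [div_eq_mul_inv, mul_comm]
        congr 2
        ring
    rw [funext hterm] at hsum
    have h1 : Tendsto (fun n => ∑ k ∈ Finset.range n, coef s k * zc a ^ k) atTop
        (𝓝 (HurwitzZeta.expZeta (↑a : UnitAddCircle) s)) := hsum.tendsto_sum_nat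
    have h2 := tendsto_partial_limA ha (by linarith : 0 < s.re)
    exact tendsto_nhds_unique h2 h1
  -- analytic:
  have hA1 : AnalyticOnNhd ℂ (limA a) {s : ℂ | 1/2 < s.re} :=
    (differentiableOn_limA ha).analyticOnNhd hU
  have hA2 : AnalyticOnNhd ℂ (fun s => HurwitzZeta.expZeta (↑a : UnitAddCircle) s)
      {s : ℂ | 1/2 < s.re} :=
    ((HurwitzZeta.differentiable_expZeta_of_ne_zero
      (coe_ne_zero_of_mem_Ioo ha)).differentiableOn).analyticOnNhd hU
  have h2U : (2 : ℂ) ∈ {s : ℂ | 1/2 < s.re} := by norm_num [Set.mem_setOf_eq]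
  have h2V : {s : ℂ | 1 < s.re} ∈ 𝓝 (2 : ℂ) :=
    hV.mem_nhds (by norm_num [Set.mem_setOf_eq])
  exact hA1.eqOn_of_preconnected_of_eventuallyEq hA2 hUconn h2U
    (Filter.eventuallyEq_of_mem h2V heq)

/-- Pointwise convergence of the partial sums to `expZeta` for `1/2 < re s`. -/
lemma tendsto_pointwise_range (ha : a ∈ Set.Ioo (0:ℝ) 1) {s : ℂ} (hs : 1/2 < s.re) :
    Tendsto (fun n => ∑ k ∈ Finset.range n, coef s k * zc a ^ k) atTop
      (𝓝 (HurwitzZeta.expZeta (↑a : UnitAddCircle) s)) := by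
  have := tendsto_partial_limA ha (by linarith : 0 < s.re)
  rwa [eqOn_limA_expZeta ha (Set.mem_setOf_eq ▸ hs)] at this

/-- Rewriting the `Icc` partial sums as `range` partial sums. -/
lemma sum_Icc_eq_range (s : ℂ) (a : ℝ) (K : ℕ) :
    ∑ k ∈ Finset.Icc 1 K, (k : ℂ) ^ (-s) * Complex.exp (2 * π * Complex.I * k * a)
      = ∑ k ∈ Finset.range (K + 1), coef s k * zc a ^ k := by
  rw [Finset.range_eq_Ico, Finset.sum_eq_sum_Ico_succ_bot (Nat.succ_pos K)]
  rw [coef_zero, zero_mul, zero_add, Nat.succ_eq_add_one, Finset.Ico_add_one_right_eq_Icc]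
  apply Finset.sum_congr rfl
  intro k hk
  rw [Finset.mem_Icc] at hk
  rw [coef_of_ne_zero s (by omega : k ≠ 0), zc_pow]

section L2

/-- Lebesgue measure restricted to `(0,1)`. -/
noncomputable def μ01 : Measure ℝ := volume.restrict (Set.Ioo (0:ℝ) 1)

instance : IsFiniteMeasure μ01 := by
  constructor
  rw [μ01, Measure.restrict_apply_univ, Real.volume_Ioo]
  exact ENNReal.ofReal_lt_top

/-- The exponentials `e^{2πika}`. -/
noncomputable def ek (k : ℕ) : ℝ → ℂ := fun a => Complex.exp (2 * π * Complex.I * k * a)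

lemma continuous_ek (k : ℕ) : Continuous (ek k) := by
  apply Complex.continuous_exp.comp
  exact continuous_const.mul Complex.continuous_ofReal

lemma norm_ek (k : ℕ) (a : ℝ) : ‖ek k a‖ = 1 := by
  rw [ek, Complex.norm_exp]
  have : (2 * ↑π * I * ↑k * ↑a).re = 0 := by simp
  rw [this, Real.exp_zero]

lemma memℒp_ek (k : ℕ) : MemLp (ek k) 2 μ01 := by
  apply MemLp.of_bound (continuous_ek k).aestronglyMeasurable 1
  filter_upwards with x
  rw [norm_ek]

/-- The exponentials as elements of `L²`. -/
noncomputable def Φlp (k : ℕ) : Lp ℂ 2 μ01 := (memℒp_ek k).toLp (ek k)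

lemma integral_exp_int {m : ℤ} (hm : m ≠ 0) :
    ∫ x in Set.Ioo (0:ℝ) 1, Complex.exp (2 * π * Complex.I * m * x) = 0 := by
  rw [← integral_Ioc_eq_integral_Ioo, ← intervalIntegral.integral_of_le (zero_le_one)]
  have hc : (2 * ↑π * I * (m : ℂ)) ≠ 0 := by
    simp [Real.pi_ne_zero, Complex.I_ne_zero, hm]
  rw [integral_exp_mul_complex hc]
  simp only [Complex.ofReal_one, Complex.ofReal_zero]
  have h1 : (2 * ↑π * I * (m:ℂ)) * 1 = (m:ℂ) * (2 * ↑π * I) := by ring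
  have h2 : (2 * ↑π * I * (m:ℂ)) * 0 = 0 := by ring
  rw [h1, h2, Complex.exp_zero, Complex.exp_int_mul_two_pi_mul_I, sub_self, zero_div]

lemma orthonormal_Φlp : Orthonormal ℂ Φlp := by
  rw [orthonormal_iff_ite]
  intro j k
  rw [MeasureTheory.L2.inner_def]
  have hcongr : ∫ x, (inner ℂ ((Φlp j : ℝ → ℂ) x) ((Φlp k : ℝ → ℂ) x) : ℂ) ∂μ01
      = ∫ x, (starRingEnd ℂ) (ek j x) * ek k x ∂μ01 := by
    apply integral_congr_ae
    filter_upwards [(memℒp_ek j).coeFn_toLp, (memℒp_ek k).coeFn_toLp] with x h1 h2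
    rw [RCLike.inner_apply]
    rw [show (Φlp j : ℝ → ℂ) x = ek j x from h1, show (Φlp k : ℝ → ℂ) x = ek k x from h2]
    rw [mul_comm]
  rw [hcongr]
  have hmul : ∀ x : ℝ, (starRingEnd ℂ) (ek j x) * ek k x
      = Complex.exp (2 * π * Complex.I * ((k : ℤ) - (j : ℤ) : ℤ) * x) := by
    intro x
    rw [ek, ek, ← Complex.exp_conj, ← Complex.exp_add]
    congr 1
    simp only [map_mul, Complex.conj_I, Complex.conj_ofReal, map_ofNat, map_natCast]
    push_cast
    ring
  simp_rw [hmul]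
  rcases eq_or_ne j k with rfl | hjk
  · rw [if_pos rfl]
    have : ((j : ℤ) - (j : ℤ) : ℤ) = 0 := by ring
    rw [this]
    simp only [Int.cast_zero, mul_zero, zero_mul, Complex.exp_zero]
    rw [μ01, integral_const]
    simp [Real.volume_Ioo]
  · rw [if_neg hjk]
    have hm : ((k : ℤ) - (j : ℤ) : ℤ) ≠ 0 := by
      intro h
      apply hjk
      have : (j : ℤ) = (k : ℤ) := by omega
      exact_mod_cast this
    rw [μ01]
    exact integral_exp_int hm

lemma summable_sq {s : ℂ} (hs : 1/2 < s.re) :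
    Summable (fun k : ℕ => ‖coef s k‖ ^ 2) := by
  apply Summable.of_norm_bounded_eventually (g := fun k : ℕ => (k : ℝ) ^ (-(2 * s.re)))
  · rw [Real.summable_nat_rpow]
    linarith
  · have hsub : {k : ℕ | ¬ ‖‖coef s k‖ ^ 2‖ ≤ (k:ℝ) ^ (-(2 * s.re))} ⊆ {0} := by
      intro k hk
      by_contra h0
      apply hk
      have hk0 : k ≠ 0 := by simpa using h0
      have hkpos : (0:ℝ) < k := by exact_mod_cast Nat.pos_of_ne_zero hk0
      rw [norm_coef hk0 s]
      rw [Real.norm_eq_abs, _root_.abs_of_nonneg (sq_nonneg ((k:ℝ) ^ (-s.re)))]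
      rw [sq, ← Real.rpow_add hkpos]
      apply le_of_eq
      congr 1
      ring
    exact Set.Finite.subset (Set.finite_singleton 0) hsub

lemma summable_vec {s : ℂ} (hs : 1/2 < s.re) :
    Summable (fun k : ℕ => coef s k • Φlp k) := by
  have hfam := orthonormal_Φlp.orthogonalFamily
  have := (hfam.summable_iff_norm_sq_summable (fun k => coef s k)).mpr (by
    simpa using summable_sq hs)
  simpa [LinearIsometry.toSpanSingleton_apply] using this

end L2

section Main

lemma coeFn_sum_eq (s : ℂ) (F : Finset ℕ) :
    ⇑(∑ k ∈ F, coef s k • Φlp k) =ᵐ[μ01] fun x => ∑ k ∈ F, coef s k * ek k x := by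
  classical
  induction F using Finset.induction_on with
  | empty =>
    simp only [Finset.sum_empty]
    filter_upwards [MeasureTheory.Lp.coeFn_zero (E := ℂ) (p := 2) (μ := μ01)] with x hx
    simpa using hx
  | @insert b F hb ih =>
    rw [Finset.sum_insert hb]
    filter_upwards [MeasureTheory.Lp.coeFn_add (coef s b • Φlp b) (∑ k ∈ F, coef s k • Φlp k),
      MeasureTheory.Lp.coeFn_smul (coef s b) (Φlp b), (memℒp_ek b).coeFn_toLp, ih] with x h1 h2 h3 h4
    rw [h1, Finset.sum_insert hb, Pi.add_apply, h4, h2, Pi.smul_apply, smul_eq_mul]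
    unfold Φlp
    rw [h3]

/-- Main L² lemma. -/
lemma L2_main {s : ℂ} (hs : 1/2 < s.re) :
    MemLp (fun a : ℝ => HurwitzZeta.expZeta (↑a : UnitAddCircle) s) 2 μ01 ∧
    Tendsto (fun K : ℕ => eLpNorm
      (fun a : ℝ => (∑ k ∈ Finset.Icc 1 K, (k : ℂ) ^ (-s)
          * Complex.exp (2 * π * Complex.I * k * a))
        - HurwitzZeta.expZeta (↑a : UnitAddCircle) s) 2 μ01) atTop (𝓝 0) := by
  classical
  set Sfun : ℕ → ℝ → ℂ := fun n x => ∑ k ∈ Finset.range n, coef s k * ek k x with hSfun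
  set T : ℕ → Lp ℂ 2 μ01 := fun n => ∑ k ∈ Finset.range n, coef s k • Φlp k with hTdef
  obtain ⟨G, hG⟩ := summable_vec hs
  have hT : Tendsto T atTop (𝓝 G) := hG.tendsto_sum_nat
  have hcoe : ∀ n, ⇑(T n) =ᵐ[μ01] Sfun n := fun n => coeFn_sum_eq s (Finset.range n)
  have hSmeas : ∀ n, AEStronglyMeasurable (Sfun n) μ01 := by
    intro n
    apply Continuous.aestronglyMeasurable
    exact continuous_finset_sum _ (fun k _ => continuous_const.mul (continuous_ek k))
  have heq : ∀ n, eLpNorm (Sfun n - ⇑G) 2 μ01 = ENNReal.ofReal ‖T n - G‖ := by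
    intro n
    have hae : Sfun n - ⇑G =ᵐ[μ01] ⇑(T n - G) := by
      filter_upwards [hcoe n, MeasureTheory.Lp.coeFn_sub (T n) G] with x h1 h2
      rw [Pi.sub_apply, h2, Pi.sub_apply, h1]
    rw [eLpNorm_congr_ae hae, MeasureTheory.Lp.norm_def,
      ENNReal.ofReal_toReal (MeasureTheory.Lp.eLpNorm_ne_top _)]
  have hnorm0 : Tendsto (fun n => ‖T n - G‖) atTop (𝓝 0) := by
    have h1 : Tendsto (fun n => T n - G) atTop (𝓝 0) := by
      simpa using hT.sub (tendsto_const_nhds (x := G))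
    exact tendsto_zero_iff_norm_tendsto_zero.mp h1
  have htendsto0 : Tendsto (fun n => eLpNorm (Sfun n - ⇑G) 2 μ01) atTop (𝓝 0) := by
    simp_rw [heq]
    have := (ENNReal.tendsto_ofReal hnorm0)
    simpa using this
  have hmeas : TendstoInMeasure μ01 Sfun atTop ⇑G :=
    tendstoInMeasure_of_tendsto_eLpNorm (by norm_num : (2:ENNReal) ≠ 0) hSmeas
      (MeasureTheory.Lp.aestronglyMeasurable G) htendsto0
  obtain ⟨ns, hns, hae⟩ := hmeas.exists_seq_tendsto_ae
  have hIoo : ∀ᵐ x ∂μ01, x ∈ Set.Ioo (0:ℝ) 1 := ae_restrict_mem measurableSet_Ioo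
  have hFae : ⇑G =ᵐ[μ01] fun x : ℝ => HurwitzZeta.expZeta (↑x : UnitAddCircle) s := by
    filter_upwards [hae, hIoo] with x hx1 hx2
    have hpt : Tendsto (fun n => Sfun n x) atTop
        (𝓝 (HurwitzZeta.expZeta (↑x : UnitAddCircle) s)) := by
      have := tendsto_pointwise_range hx2 hs
      simpa [hSfun, ek, zc_pow] using this
    have hsub : Tendsto (fun i => Sfun (ns i) x) atTop
        (𝓝 (HurwitzZeta.expZeta (↑x : UnitAddCircle) s)) := hpt.comp hns.tendsto_atTop
    exact tendsto_nhds_unique hx1 hsub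
  constructor
  · exact (MeasureTheory.Lp.memLp G).ae_eq hFae
  · have hK : ∀ K : ℕ, eLpNorm
        (fun a : ℝ => (∑ k ∈ Finset.Icc 1 K, (k : ℂ) ^ (-s)
            * Complex.exp (2 * π * Complex.I * k * a))
          - HurwitzZeta.expZeta (↑a : UnitAddCircle) s) 2 μ01
        = eLpNorm (Sfun (K + 1) - ⇑G) 2 μ01 := by
      intro K
      apply eLpNorm_congr_ae
      filter_upwards [hFae] with x hx
      rw [Pi.sub_apply, ← hx, sum_Icc_eq_range]
      simp only [hSfun]
      congr 1
      exact Finset.sum_congr rfl (fun k _ => by rw [zc_pow]; rfl)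
    simp_rw [hK]
    exact htendsto0.comp (tendsto_add_atTop_nat 1)

end Main

end PZaux


/-- for `Re s > 1/2` with moreover `Re s > 1` or `|Im s| > 1`, `F_s` belongs
to `L²(0,1)` and the partial sums `∑_{k=1}^K k^{-s} e^{2πika}` converge to `F_s` in the
`L²(0,1)` norm. -/
theorem periodizedZeta_L2_convergence (s : ℂ) (hσ : 1 / 2 < s.re)
    (h : 1 < s.re ∨ 1 < |s.im|) :
    MeasureTheory.MemLp (periodizedZeta s) 2
      (MeasureTheory.volume.restrict (Set.Ioo (0 : ℝ) 1)) ∧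
    Filter.Tendsto
      (fun K : ℕ =>
        MeasureTheory.eLpNorm
          (fun a : ℝ =>
            (∑ k ∈ Finset.Icc 1 K, (k : ℂ) ^ (-s) * Complex.exp (2 * π * Complex.I * k * a))
              - periodizedZeta s a) 2
          (MeasureTheory.volume.restrict (Set.Ioo (0 : ℝ) 1)))
      Filter.atTop (nhds 0) := by
  exact PZaux.L2_main hσ
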